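/- Let G be a connected finite simple graph with Laplacian matrix L and let X be any {1}-inverse of L (i.e., L·X·L = L). Then the effective resistance between vertices u and v satisfies r_uv = X_uu + X_vv − X_uv − X_vu. -/

import Mathlib

open Matrix

/-- Effective resistance defined from a (pseudo)inverse matrix. -/
def effRes {V : Type*} (M : Matrix V V ℝ) (u v : V) : ℝ :=
  M u u + M v v - 2 * M u v

/-- Uniqueness of the Moore–Penrose inverse. -/
lemma mp_unique {V : Type*} [Fintype V] [DecidableEq V]
    (A B C : Matrix V V ℝ)
    (h1 : A * B * A = A) (h1' : A * C * A = A)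
    (h2 : B * A * B = B) (h2' : C * A * C = C)
    (h3 : (A * B)ᵀ = A * B) (h3' : (A * C)ᵀ = A * C)
    (h4 : (B * A)ᵀ = B * A) (h4' : (C * A)ᵀ = C * A) :
    B = C := by
  have hAB : A * B = A * C := by
    calc A * B = (A * C * A) * B := by rw [h1']
    _ = (A * C) * (A * B) := by simp only [mul_assoc]
    _ = (A * C)ᵀ * (A * B)ᵀ := by rw [h3, h3']
    _ = Cᵀ * (A * B * A)ᵀ := by simp only [transpose_mul, mul_assoc]
    _ = Cᵀ * Aᵀ := by rw [h1]
    _ = (A * C)ᵀ := by rw [transpose_mul]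
    _ = A * C := h3'
  have hBA : B * A = C * A := by
    calc B * A = B * (A * C * A) := by rw [h1']
    _ = (B * A) * (C * A) := by simp only [mul_assoc]
    _ = (B * A)ᵀ * (C * A)ᵀ := by rw [h4, h4']
    _ = ((C * A) * (B * A))ᵀ := (transpose_mul _ _).symm
    _ = (C * (A * B * A))ᵀ := by simp only [mul_assoc]
    _ = (C * A)ᵀ := by rw [h1]
    _ = C * A := h4'
  calc B = B * A * B := h2.symm
  _ = B * (A * B) := by rw [mul_assoc]
  _ = B * (A * C) := by rw [hAB]
  _ = (B * A) * C := by rw [mul_assoc]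
  _ = (C * A) * C := by rw [hBA]
  _ = C := h2'

lemma quad_expand {V : Type*} [Fintype V] [DecidableEq V] (M : Matrix V V ℝ)
    {u v : V} (huv : u ≠ v) :
    (fun w => (if w = u then (1:ℝ) else 0) - if w = v then 1 else 0) ⬝ᵥ
      (M *ᵥ fun w => (if w = u then (1:ℝ) else 0) - if w = v then 1 else 0) =
    M u u + M v v - M u v - M v u := by
  simp only [dotProduct, mulVec, sub_mul, mul_sub, ite_mul, one_mul, zero_mul,
    mul_ite, mul_one, mul_zero, Finset.sum_sub_distrib, Finset.sum_ite_eq',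
    Finset.mem_univ, if_true]
  ring

theorem resistance_via_one_inverse {V : Type*} [Fintype V] [DecidableEq V]
    (G : SimpleGraph V) [DecidableRel G.Adj] (hG : G.Connected)
    (Lp X : Matrix V V ℝ)
    (hp1 : G.lapMatrix ℝ * Lp * G.lapMatrix ℝ = G.lapMatrix ℝ)
    (hp2 : Lp * G.lapMatrix ℝ * Lp = Lp)
    (hp3 : (G.lapMatrix ℝ * Lp)ᵀ = G.lapMatrix ℝ * Lp)
    (hp4 : (Lp * G.lapMatrix ℝ)ᵀ = Lp * G.lapMatrix ℝ)
    (hX : G.lapMatrix ℝ * X * G.lapMatrix ℝ = G.lapMatrix ℝ) :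
    ∀ u v : V, effRes Lp u v = X u u + X v v - X u v - X v u := by
  set L := G.lapMatrix ℝ with hLdef
  have hL : Lᵀ = L := G.isSymm_lapMatrix (R := ℝ)
  -- symmetry of Lp (uniqueness of the Moore–Penrose inverse)
  have hC1 : L * Lpᵀ * L = L := by
    have := congrArg Matrix.transpose hp1
    simpa only [transpose_mul, hL, mul_assoc] using this
  have hC2 : Lpᵀ * L * Lpᵀ = Lpᵀ := by
    have := congrArg Matrix.transpose hp2
    simpa only [transpose_mul, hL, mul_assoc] using this
  have hC3 : (L * Lpᵀ)ᵀ = L * Lpᵀ := by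
    calc (L * Lpᵀ)ᵀ = Lp * Lᵀ := by rw [transpose_mul, transpose_transpose]
    _ = Lp * L := by rw [hL]
    _ = (Lp * L)ᵀ := hp4.symm
    _ = Lᵀ * Lpᵀ := by rw [transpose_mul]
    _ = L * Lpᵀ := by rw [hL]
  have hC4 : (Lpᵀ * L)ᵀ = Lpᵀ * L := by
    calc (Lpᵀ * L)ᵀ = Lᵀ * Lp := by rw [transpose_mul, transpose_transpose]
    _ = L * Lp := by rw [hL]
    _ = (L * Lp)ᵀ := hp3.symm
    _ = Lpᵀ * Lᵀ := by rw [transpose_mul]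
    _ = Lpᵀ * L := by rw [hL]
  have hsym : Lp = Lpᵀ := mp_unique L Lp Lpᵀ hp1 hC1 hp2 hC2 hp3 hC3 hp4 hC4
  have hsym' : ∀ a b, Lp a b = Lp b a := by
    intro a b
    conv_rhs => rw [hsym]
    rfl
  -- L and Lp commute, so L * (L * Lp) = L
  have hcomm : L * Lp = Lp * L := by
    calc L * Lp = (L * Lp)ᵀ := hp3.symm
    _ = Lpᵀ * Lᵀ := transpose_mul _ _
    _ = Lp * L := by rw [← hsym, hL]
  have hM : L * (L * Lp) = L := by
    rw [hcomm, ← mul_assoc, hp1]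
  intro u v
  by_cases huv : u = v
  · subst huv; unfold effRes; ring
  set e : V → ℝ := fun w => (if w = u then (1:ℝ) else 0) - if w = v then 1 else 0 with he
  set d : V → ℝ := fun i => e i - ((L * Lp) *ᵥ e) i with hd
  -- d is in the kernel of L
  have hLd : L *ᵥ d = 0 := by
    have h0 : d = e - (L * Lp) *ᵥ e := rfl
    rw [h0, mulVec_sub, mulVec_mulVec, hM, sub_self]
  -- hence d is constant (connectedness)
  have hdconst : ∀ i j : V, d i = d j := by
    have h0 : Matrix.toLin' (G.lapMatrix ℝ) d = 0 := by
      rw [Matrix.toLin'_apply]; exact hLd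
    intro i j
    exact (G.lapMatrix_mulVec_eq_zero_iff_forall_reachable (x := d)).mp hLd i j (hG.preconnected i j)
  -- the entries of d sum to zero
  have hsum : ∑ i, d i = 0 := by
    have hA : ∑ i, e i = 0 := by
      simp [he, Finset.sum_sub_distrib]
    have h1 : (fun _ : V => (1:ℝ)) ᵥ* L = 0 := by
      rw [← hL, vecMul_transpose]
      exact G.lapMatrix_mulVec_const_eq_zero
    have hB : ∑ i, ((L * Lp) *ᵥ e) i = 0 := by
      calc ∑ i, ((L * Lp) *ᵥ e) i = (fun _ : V => (1:ℝ)) ⬝ᵥ ((L * Lp) *ᵥ e) := by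
            simp [dotProduct]
      _ = ((fun _ : V => (1:ℝ)) ᵥ* (L * Lp)) ⬝ᵥ e := dotProduct_mulVec _ _ _
      _ = (((fun _ : V => (1:ℝ)) ᵥ* L) ᵥ* Lp) ⬝ᵥ e := by rw [vecMul_vecMul]
      _ = 0 := by rw [h1]; simp
    calc ∑ i, d i = ∑ i, (e i - ((L * Lp) *ᵥ e) i) := rfl
    _ = ∑ i, e i - ∑ i, ((L * Lp) *ᵥ e) i := Finset.sum_sub_distrib _ _
    _ = 0 := by rw [hA, hB, sub_zero]
  -- so d = 0
  haveI : Nonempty V := hG.nonempty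
  have hdu : d u = 0 := by
    have h2 : ∑ i : V, d i = (Fintype.card V : ℝ) * d u := by
      rw [Finset.sum_congr rfl (fun i _ => hdconst i u), Finset.sum_const, nsmul_eq_mul]
      simp [Finset.card_univ]
    rw [h2] at hsum
    have hc : (Fintype.card V : ℝ) ≠ 0 := Nat.cast_ne_zero.mpr Fintype.card_ne_zero
    exact (mul_eq_zero.mp hsum).resolve_left hc
  have hd0 : ∀ i, d i = 0 := fun i => (hdconst i u).trans hdu
  -- e is in the range of L
  set w : V → ℝ := Lp *ᵥ e with hw
  have hew : e = L *ᵥ w := by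
    funext i
    have h3 := hd0 i
    simp only [hd] at h3
    rw [hw, mulVec_mulVec]
    linarith
  have hew2 : e = w ᵥ* L := by
    rw [hew, ← hL, mulVec_transpose, hL]
  -- the key quadratic-form identity
  have key : ∀ M : Matrix V V ℝ, e ⬝ᵥ (M *ᵥ e) = w ⬝ᵥ ((L * M * L) *ᵥ w) := by
    intro M
    calc e ⬝ᵥ (M *ᵥ e) = (w ᵥ* L) ⬝ᵥ (M *ᵥ (L *ᵥ w)) := by rw [← hew2, ← hew]
    _ = w ⬝ᵥ (L *ᵥ (M *ᵥ (L *ᵥ w))) := (dotProduct_mulVec _ _ _).symm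
    _ = w ⬝ᵥ ((L * M * L) *ᵥ w) := by rw [mulVec_mulVec, mulVec_mulVec]
  have hq : e ⬝ᵥ (Lp *ᵥ e) = e ⬝ᵥ (X *ᵥ e) := by rw [key Lp, key X, hp1, hX]
  have hq1 := quad_expand Lp huv
  have hq2 := quad_expand X huv
  rw [← he] at hq1 hq2
  unfold effRes
  rw [show 2 * Lp u v = Lp u v + Lp v u by rw [hsym' u v]; ring]
  rw [show Lp u u + Lp v v - (Lp u v + Lp v u) = Lp u u + Lp v v - Lp u v - Lp v u by ring]
  rw [← hq1, hq, hq2]
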